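/- Normal-form bisimilarity coincides with machine bisimilarity of NFB machines: for all open lambda-terms t and s, t ~nf s if and only if there exists n > max(fv(t) ∪ fv(s)) such that <t | [] | n>_ev ~m <s | [] | n>_ev. -/
import Mathlib


/-! ### Open call-by-name lambda-terms (free variables are natural numbers)
and the KAM -/

/-- Lambda-terms: free variables `fvar f` (natural numbers) and bound variables
in de Bruijn representation. -/
inductive Term
  | fvar : ℕ → Term
  | bvar : ℕ → Term
  | lam : Term → Term
  | app : Term → Term → Term
  deriving DecidableEq

namespace Term

/-- Shift the de Bruijn indices `≥ k` by `d`. -/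
def liftT (d : ℕ) : ℕ → Term → Term
  | _, fvar f => fvar f
  | k, bvar n => if n < k then bvar n else bvar (n + d)
  | k, lam t => lam (liftT d (k + 1) t)
  | k, app t s => app (liftT d k t) (liftT d k s)

/-- Capture-avoiding substitution of `s` for the de Bruijn index `k`. -/
def substT : Term → ℕ → Term → Term
  | fvar f, _, _ => fvar f
  | bvar n, k, s => if n = k then liftT k 0 s else if k < n then bvar (n - 1) else bvar n
  | lam t, k, s => lam (substT t (k + 1) s)
  | app t u, k, s => app (substT t k s) (substT u k s)

/-- Free variables of a term. -/
def fv : Term → Finset ℕ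
  | fvar f => {f}
  | bvar _ => ∅
  | lam t => fv t
  | app t s => fv t ∪ fv s

end Term

/-- Stacks of the KAM. -/
inductive Stack
  | nil : Stack
  | cons : Term → Stack → Stack

/-- Configurations of the KAM. -/
structure KConf where
  t : Term
  π : Stack

/-- Transitions of the KAM. -/
inductive KStep : KConf → KConf → Prop
  | push {t s π} : KStep ⟨.app t s, π⟩ ⟨t, .cons s π⟩
  | grab {t s π} : KStep ⟨.lam t, .cons s π⟩ ⟨t.substT 0 s, π⟩

/-- Reflexive-transitive closure of KAM transitions. -/
def KSteps : KConf → KConf → Prop := Relation.ReflTransGen KStep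
/-! ### The NFB machine -/

/-- Flags of the NFB machine: `lam`, `done`, `enter`, `skip` and free variables
(natural numbers). -/
inductive NFlag
  | flam | fdone | fenter | fskip
  | fvarF : ℕ → NFlag
  deriving DecidableEq

/-- Labels of the NFB machine: `tau` or a flag. -/
inductive MLabel
  | tau : MLabel
  | flag : NFlag → MLabel

/-- Configurations of the NFB machine: evaluation mode `<t | π | n>_ev` and
continuation mode `<π | n>_cont`. -/
inductive NConf
  | ev : Term → Stack → ℕ → NConf
  | cont : Stack → ℕ → NConf

/-- Labeled transitions of the NFB machine. -/
inductive NStep : NConf → MLabel → NConf → Prop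
  | push {t s π n} : NStep (.ev (.app t s) π n) .tau (.ev t (.cons s π) n)
  | grab {t s π n} : NStep (.ev (.lam t) (.cons s π) n) .tau (.ev (t.substT 0 s) π n)
  | lambda {t n} : NStep (.ev (.lam t) .nil n) (.flag .flam)
      (.ev (t.substT 0 (.fvar n)) .nil (n + 1))
  | var {f π n} : NStep (.ev (.fvar f) π n) (.flag (.fvarF f)) (.cont π n)
  | enter {t π n} : NStep (.cont (.cons t π) n) (.flag .fenter) (.ev t .nil n)
  | skip {t π n} : NStep (.cont (.cons t π) n) (.flag .fskip) (.cont π n)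

/-- Terminating flagged transitions of the NFB machine (no target configuration). -/
inductive NFinal : NConf → NFlag → Prop
  | done {n} : NFinal (.cont .nil n) .fdone

/-- Silent transitions of the NFB machine. -/
def NTau (C C' : NConf) : Prop := NStep C .tau C'

/-- Flagged transitions of the NFB machine. -/
def NFlagStep (C : NConf) (F : NFlag) (C' : NConf) : Prop := NStep C (.flag F) C'
/-! ### Machine bisimilarity for flagged abstract machines -/

/-- Machine bisimulation for a flagged abstract machine given by silent steps
`tstep`, flagged steps `fstep`, and terminating flagged transitions `final`. -/
def IsMachineBisim {Conf Fl : Type} (tstep : Conf → Conf → Prop)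
    (fstep : Conf → Fl → Conf → Prop) (final : Conf → Fl → Prop)
    (R : Conf → Conf → Prop) : Prop :=
  Symmetric R ∧ ∀ C1 C2, R C1 C2 →
    (∀ (F : Fl) (C1' : Conf),
        (∃ C, Relation.ReflTransGen tstep C1 C ∧ fstep C F C1') →
        ∃ C2', (∃ C, Relation.ReflTransGen tstep C2 C ∧ fstep C F C2') ∧ R C1' C2') ∧
    (∀ F : Fl, (∃ C, Relation.ReflTransGen tstep C1 C ∧ final C F) →
        ∃ C, Relation.ReflTransGen tstep C2 C ∧ final C F)

/-- Machine bisimilarity: the largest machine bisimulation. -/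
def MachineBisim {Conf Fl : Type} (tstep : Conf → Conf → Prop)
    (fstep : Conf → Fl → Conf → Prop) (final : Conf → Fl → Prop)
    (C1 C2 : Conf) : Prop :=
  ∃ R, IsMachineBisim tstep fstep final R ∧ R C1 C2
/-! ### Normal-form bisimilarity (call-by-name) -/

/-- Extension of a relation on terms to stacks: pairwise related elements. -/
inductive StackRel (R : Term → Term → Prop) : Stack → Stack → Prop
  | nil : StackRel R .nil .nil
  | cons {t s π π'} : R t s → StackRel R π π' → StackRel R (.cons t π) (.cons s π')

/-- Normal-form bisimulation. -/
def IsNFBisim (R : Term → Term → Prop) : Prop :=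
  Symmetric R ∧ ∀ t s, R t s →
    (∀ t', KSteps ⟨t, .nil⟩ ⟨.lam t', .nil⟩ →
      ∃ s', KSteps ⟨s, .nil⟩ ⟨.lam s', .nil⟩ ∧
        ∀ f, f ∉ t'.fv ∪ s'.fv →
          R (t'.substT 0 (.fvar f)) (s'.substT 0 (.fvar f))) ∧
    (∀ f π, KSteps ⟨t, .nil⟩ ⟨.fvar f, π⟩ →
      ∃ π', KSteps ⟨s, .nil⟩ ⟨.fvar f, π'⟩ ∧ StackRel R π π')

/-- Normal-form bisimilarity: the largest normal-form bisimulation. -/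
def NFBisim (t s : Term) : Prop := ∃ R, IsNFBisim R ∧ R t s

/-! ### Statement 4: normal-form bisimilarity coincides with machine bisimilarity -/
/-! ### Auxiliary development -/

namespace Term

/-- Renaming of free variables. -/
def ren (ρ : ℕ → ℕ) : Term → Term
  | fvar f => fvar (ρ f)
  | bvar n => bvar n
  | lam t => lam (ren ρ t)
  | app t s => app (ren ρ t) (ren ρ s)

theorem ren_liftT (ρ : ℕ → ℕ) (d : ℕ) : ∀ (t : Term) (k : ℕ),
    ren ρ (liftT d k t) = liftT d k (ren ρ t) := by
  intro t
  induction t with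
  | fvar f => intro k; rfl
  | bvar n => intro k; simp only [liftT, ren]; split <;> rfl
  | lam t ih => intro k; simp [liftT, ren, ih]
  | app t s iht ihs => intro k; simp [liftT, ren, iht, ihs]

theorem ren_substT (ρ : ℕ → ℕ) (s : Term) : ∀ (t : Term) (k : ℕ),
    ren ρ (substT t k s) = substT (ren ρ t) k (ren ρ s) := by
  intro t
  induction t with
  | fvar f => intro k; rfl
  | bvar n => intro k
              simp only [substT, ren]
              split
              · exact ren_liftT ρ k s 0
              · split <;> rfl
  | lam t ih => intro k; simp [substT, ren, ih]
  | app t u iht ihu => intro k; simp [substT, ren, iht, ihu]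

theorem fv_liftT (d : ℕ) : ∀ (t : Term) (k : ℕ), (liftT d k t).fv = t.fv := by
  intro t
  induction t with
  | fvar f => intro k; rfl
  | bvar n => intro k; simp only [liftT]; split <;> rfl
  | lam t ih => intro k; simp [liftT, fv, ih]
  | app t s iht ihs => intro k; simp [liftT, fv, iht, ihs]

theorem fv_substT (s : Term) : ∀ (t : Term) (k : ℕ),
    (substT t k s).fv ⊆ t.fv ∪ s.fv := by
  intro t
  induction t with
  | fvar f => intro k; simp [substT, fv]
  | bvar n => intro k
              simp only [substT]
              split
              · rw [fv_liftT]; simp [fv]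
              · split <;> simp [fv]
  | lam t ih => intro k; simpa [substT, fv] using ih (k+1)
  | app t u iht ihu =>
      intro k
      simp only [substT, fv]
      intro x hx
      rcases Finset.mem_union.1 hx with h | h
      · rcases Finset.mem_union.1 (iht k h) with h' | h'
        · exact Finset.mem_union_left _ (Finset.mem_union_left _ h')
        · exact Finset.mem_union_right _ h'
      · rcases Finset.mem_union.1 (ihu k h) with h' | h'
        · exact Finset.mem_union_left _ (Finset.mem_union_right _ h')
        · exact Finset.mem_union_right _ h'

theorem ren_id_of_fv {ρ : ℕ → ℕ} : ∀ {t : Term}, (∀ g ∈ t.fv, ρ g = g) → ren ρ t = t := by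
  intro t
  induction t with
  | fvar f => intro h; simp [ren, h f (by simp [fv])]
  | bvar n => intro _; rfl
  | lam t ih => intro h; simp only [ren]; rw [ih (by simpa [fv] using h)]
  | app t u iht ihu =>
      intro h
      simp only [ren]
      rw [iht fun g hg => h g (by simp [fv, hg]), ihu fun g hg => h g (by simp [fv, hg])]

end Term
/-- Free variables of a stack. -/
def Stack.fvS : Stack → Finset ℕ
  | .nil => ∅
  | .cons t π => t.fv ∪ π.fvS

/-- Renaming on stacks. -/
def Stack.renS (ρ : ℕ → ℕ) : Stack → Stack
  | .nil => .nil
  | .cons t π => .cons (t.ren ρ) (π.renS ρ)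

/-- Free variables of a KAM configuration. -/
def KConf.fvK (c : KConf) : Finset ℕ := c.t.fv ∪ c.π.fvS

theorem KStep.fv_mono {c c' : KConf} (h : KStep c c') : c'.fvK ⊆ c.fvK := by
  cases h with
  | push =>
      simp only [KConf.fvK, Term.fv, Stack.fvS]
      intro x hx; simp at hx ⊢; tauto
  | @grab t s π =>
      simp only [KConf.fvK, Term.fv, Stack.fvS]
      intro x hx
      rcases Finset.mem_union.1 hx with h | h
      · have := Term.fv_substT s t 0 h
        simp at this ⊢; tauto
      · simp at h ⊢; tauto

theorem KSteps.fv_mono {c c' : KConf} (h : KSteps c c') : c'.fvK ⊆ c.fvK := by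
  induction h with
  | refl => exact subset_rfl
  | tail _ hstep ih => exact (KStep.fv_mono hstep).trans ih

/-- KAM steps correspond to silent steps of the NFB machine. -/
theorem kstep_to_ntau {c c' : KConf} {n : ℕ} (h : KStep c c') :
    NTau (.ev c.t c.π n) (.ev c'.t c'.π n) := by
  cases h with
  | push => exact NStep.push
  | grab => exact NStep.grab

theorem ntau_inv {t : Term} {π : Stack} {n : ℕ} {C : NConf} (h : NTau (.ev t π n) C) :
    ∃ t' π', C = .ev t' π' n ∧ KStep (⟨t, π⟩ : KConf) ⟨t', π'⟩ := by
  cases h with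
  | push => exact ⟨_, _, rfl, KStep.push⟩
  | grab => exact ⟨_, _, rfl, KStep.grab⟩

theorem ksteps_to_ntaus {c c' : KConf} (n : ℕ) (h : KSteps c c') :
    Relation.ReflTransGen NTau (.ev c.t c.π n) (.ev c'.t c'.π n) := by
  induction h with
  | refl => exact Relation.ReflTransGen.refl
  | tail _ hstep ih => exact ih.tail (kstep_to_ntau hstep)

/-- No silent steps from continuation mode. -/
theorem ntau_cont {π : Stack} {n : ℕ} {C : NConf} (h : NTau (.cont π n) C) : False := by
  cases h

theorem ntaus_cont {π : Stack} {n : ℕ} {C : NConf}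
    (h : Relation.ReflTransGen NTau (.cont π n) C) : C = .cont π n := by
  induction h with
  | refl => rfl
  | tail _ hstep ih => subst ih; exact absurd hstep ntau_cont

/-- Inversion: silent runs from evaluation mode are KAM runs. -/
theorem ntaus_ev {t : Term} {π : Stack} {n : ℕ} {C : NConf}
    (h : Relation.ReflTransGen NTau (.ev t π n) C) :
    ∃ t' π', C = .ev t' π' n ∧ KSteps (⟨t, π⟩ : KConf) ⟨t', π'⟩ := by
  induction h with
  | refl => exact ⟨t, π, rfl, Relation.ReflTransGen.refl⟩
  | tail _ hstep ih =>
      obtain ⟨t', π', rfl, hk⟩ := ih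
      obtain ⟨t'', π'', rfl, hs⟩ := ntau_inv hstep
      exact ⟨t'', π'', rfl, hk.tail hs⟩
section Generic
variable {Conf Fl : Type} {tstep : Conf → Conf → Prop}
  {fstep : Conf → Fl → Conf → Prop} {final : Conf → Fl → Prop}

theorem machineBisim_isBisim :
    IsMachineBisim tstep fstep final (MachineBisim tstep fstep final) := by
  constructor
  · intro C1 C2 ⟨R, hR, h12⟩
    exact ⟨R, hR, hR.1 h12⟩
  · rintro C1 C2 ⟨R, hR, h12⟩
    obtain ⟨hflag, hfin⟩ := hR.2 C1 C2 h12
    constructor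
    · intro F C1' h
      obtain ⟨C2', h2, hrel⟩ := hflag F C1' h
      exact ⟨C2', h2, R, hR, hrel⟩
    · exact hfin

theorem MachineBisim.symm {C1 C2 : Conf}
    (h : MachineBisim tstep fstep final C1 C2) :
    MachineBisim tstep fstep final C2 C1 := by
  obtain ⟨R, hR, h12⟩ := h
  exact ⟨R, hR, hR.1 h12⟩

theorem MachineBisim.flag_match {C1 C2 : Conf}
    (h : MachineBisim tstep fstep final C1 C2) {F : Fl} {C1' : Conf}
    (hstep : ∃ C, Relation.ReflTransGen tstep C1 C ∧ fstep C F C1') :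
    ∃ C2', (∃ C, Relation.ReflTransGen tstep C2 C ∧ fstep C F C2') ∧
      MachineBisim tstep fstep final C1' C2' :=
  (machineBisim_isBisim.2 C1 C2 h).1 F C1' hstep

theorem MachineBisim.final_match {C1 C2 : Conf}
    (h : MachineBisim tstep fstep final C1 C2) {F : Fl}
    (hstep : ∃ C, Relation.ReflTransGen tstep C1 C ∧ final C F) :
    ∃ C, Relation.ReflTransGen tstep C2 C ∧ final C F :=
  (machineBisim_isBisim.2 C1 C2 h).2 F hstep

end Generic

theorem StackRel.symm {R : Term → Term → Prop} (hR : Symmetric R) :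
    ∀ {π π' : Stack}, StackRel R π π' → StackRel R π' π := by
  intro π π' h
  induction h with
  | nil => exact StackRel.nil
  | cons hts _ ih => exact StackRel.cons (hR hts) ih

theorem StackRel.fvS_left {R : Term → Term → Prop} {π π' : Stack} :
    StackRel R π π' → True := fun _ => trivial

/-- The machine relation induced by a normal-form bisimulation. -/
inductive MRel (R : Term → Term → Prop) : NConf → NConf → Prop
  | ev {u v : Term} {m : ℕ} : R u v → (∀ g ∈ u.fv ∪ v.fv, g < m) →
      MRel R (.ev u .nil m) (.ev v .nil m)
  | cont {π π' : Stack} {m : ℕ} : StackRel R π π' →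
      (∀ g ∈ π.fvS ∪ π'.fvS, g < m) → MRel R (.cont π m) (.cont π' m)

theorem mrel_isBisim {R : Term → Term → Prop} (hR : IsNFBisim R) :
    IsMachineBisim NTau NFlagStep NFinal (MRel R) := by
  constructor
  · intro C1 C2 h
    cases h with
    | ev huv hb =>
        refine MRel.ev (hR.1 huv) ?_
        intro g hg; apply hb; rw [Finset.union_comm]; exact hg
    | cont hs hb =>
        refine MRel.cont (StackRel.symm hR.1 hs) ?_
        intro g hg; apply hb; rw [Finset.union_comm]; exact hg
  · intro C1 C2 h
    cases h with
    | @ev u v m huv hb =>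
        have hbu : ∀ g ∈ u.fv, g < m := fun g hg => hb g (Finset.mem_union_left _ hg)
        have hbv : ∀ g ∈ v.fv, g < m := fun g hg => hb g (Finset.mem_union_right _ hg)
        constructor
        · intro F C1' ⟨C, htau, hf⟩
          obtain ⟨u', π, rfl, hks⟩ := ntaus_ev htau
          have hfvk : (KConf.fvK ⟨u', π⟩) ⊆ u.fv := by
            have := hks.fv_mono
            simpa [KConf.fvK, Stack.fvS] using this
          cases hf with
          | lambda =>
              rename_i t'
              obtain ⟨s', hvks, hfresh⟩ := ((hR.2 u v huv).1) t' hks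
              have hfvk' : (KConf.fvK ⟨v, .nil⟩ : Finset ℕ) = v.fv := by
                simp [KConf.fvK, Stack.fvS]
              have hfvs' : s'.fv ⊆ v.fv := by
                have := hvks.fv_mono
                simpa [KConf.fvK, Stack.fvS, Term.fv] using this
              have hfvt' : t'.fv ⊆ u.fv := by
                simpa [KConf.fvK, Stack.fvS, Term.fv] using hfvk
              have hm : m ∉ t'.fv ∪ s'.fv := by
                intro hmem
                rcases Finset.mem_union.1 hmem with h' | h'
                · exact absurd (hbu m (hfvt' h')) (lt_irrefl m)
                · exact absurd (hbv m (hfvs' h')) (lt_irrefl m)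
              refine ⟨.ev (s'.substT 0 (.fvar m)) .nil (m+1),
                ⟨.ev (.lam s') .nil m, ksteps_to_ntaus m hvks, NStep.lambda⟩, ?_⟩
              refine MRel.ev (hfresh m hm) ?_
              intro g hg
              rcases Finset.mem_union.1 hg with h' | h'
              · have := Term.fv_substT (.fvar m) t' 0 h'
                rcases Finset.mem_union.1 this with h'' | h''
                · exact lt_trans (hbu g (hfvt' h'')) (Nat.lt_succ_self m)
                · simp [Term.fv] at h''; omega
              · have := Term.fv_substT (.fvar m) s' 0 h'
                rcases Finset.mem_union.1 this with h'' | h''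
                · exact lt_trans (hbv g (hfvs' h'')) (Nat.lt_succ_self m)
                · simp [Term.fv] at h''; omega
          | var =>
              rename_i f
              obtain ⟨π', hvks, hsr⟩ := ((hR.2 u v huv).2) f π hks
              refine ⟨.cont π' m, ⟨.ev (.fvar f) π' m, ksteps_to_ntaus m hvks, NStep.var⟩, ?_⟩
              refine MRel.cont hsr ?_
              intro g hg
              rcases Finset.mem_union.1 hg with h' | h'
              · exact hbu g (hfvk (Finset.mem_union_right _ h'))
              · have : (KConf.fvK ⟨.fvar f, π'⟩) ⊆ v.fv := by
                  have := hvks.fv_mono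
                  simpa [KConf.fvK, Stack.fvS] using this
                exact hbv g (this (Finset.mem_union_right _ h'))
        · intro F ⟨C, htau, hfin⟩
          obtain ⟨u', π, rfl, _⟩ := ntaus_ev htau
          cases hfin
    | @cont π π' m hsr hb =>
        constructor
        · intro F C1' ⟨C, htau, hf⟩
          have := ntaus_cont htau; subst this
          cases hf with
          | enter =>
              rename_i a ψ
              cases hsr with
              | cons hab hψ =>
                  rename_i b ψ'
                  refine ⟨.ev b .nil m, ⟨.cont (.cons b ψ') m, .refl, NStep.enter⟩, ?_⟩
                  refine MRel.ev hab ?_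
                  intro g hg
                  apply hb
                  rcases Finset.mem_union.1 hg with h' | h'
                  · exact Finset.mem_union_left _ (by simp [Stack.fvS, h'])
                  · exact Finset.mem_union_right _ (by simp [Stack.fvS, h'])
          | skip =>
              rename_i a ψ
              cases hsr with
              | cons hab hψ =>
                  rename_i b ψ'
                  refine ⟨.cont ψ' m, ⟨.cont (.cons b ψ') m, .refl, NStep.skip⟩, ?_⟩
                  refine MRel.cont hψ ?_
                  intro g hg
                  apply hb
                  rcases Finset.mem_union.1 hg with h' | h'
                  · exact Finset.mem_union_left _ (by simp [Stack.fvS, h'])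
                  · exact Finset.mem_union_right _ (by simp [Stack.fvS, h'])
        · intro F ⟨C, htau, hfin⟩
          have := ntaus_cont htau; subst this
          cases hfin
          cases hsr
          exact ⟨.cont .nil m, .refl, NFinal.done⟩
/-! ### Renaming of machine configurations -/

/-- Counter of an NFB-machine configuration. -/
def NConf.cnt : NConf → ℕ
  | .ev _ _ n => n
  | .cont _ n => n

/-- Rename free variables and replace the counter. -/
def mapC (ρ : ℕ → ℕ) (m' : ℕ) : NConf → NConf
  | .ev t π _ => .ev (t.ren ρ) (π.renS ρ) m'
  | .cont π _ => .cont (π.renS ρ) m'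

/-- Rename flags. -/
def mapF (ρ : ℕ → ℕ) : NFlag → NFlag
  | .fvarF g => .fvarF (ρ g)
  | F => F

/-- Counter evolution along a flag. -/
def bump : NFlag → ℕ → ℕ
  | .flam, n => n + 1
  | _, n => n

theorem NTau.cnt_eq {C C' : NConf} (h : NTau C C') : C'.cnt = C.cnt := by
  cases h <;> rfl

theorem ntaus_cnt {C C' : NConf} (h : Relation.ReflTransGen NTau C C') :
    C'.cnt = C.cnt := by
  induction h with
  | refl => rfl
  | tail _ hstep ih => rw [hstep.cnt_eq, ih]

theorem NFlagStep.cnt_eq {C : NConf} {F : NFlag} {C' : NConf} (h : NFlagStep C F C') :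
    C'.cnt = bump F C.cnt := by
  cases h <;> rfl

theorem mapC_ntau {ρ : ℕ → ℕ} {m' : ℕ} {C C' : NConf} (h : NTau C C') :
    NTau (mapC ρ m' C) (mapC ρ m' C') := by
  cases h with
  | push => exact NStep.push
  | grab =>
      simp only [mapC, Term.ren, Stack.renS, Term.ren_substT]
      exact NStep.grab

theorem mapC_ntaus {ρ : ℕ → ℕ} {m' : ℕ} {C C' : NConf}
    (h : Relation.ReflTransGen NTau C C') :
    Relation.ReflTransGen NTau (mapC ρ m' C) (mapC ρ m' C') := by
  induction h with
  | refl => exact .refl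
  | tail _ hstep ih => exact ih.tail (mapC_ntau hstep)

theorem mapC_flag {ρ : ℕ → ℕ} {m' : ℕ} {C : NConf} {F : NFlag} {C' : NConf}
    (h : NFlagStep C F C') (hρ : ρ C.cnt = m') :
    NFlagStep (mapC ρ m' C) (mapF ρ F) (mapC ρ (bump F m') C') := by
  cases h with
  | @lambda t n =>
      simp only [NConf.cnt] at hρ
      simp only [mapC, Term.ren, Stack.renS, mapF, bump, Term.ren_substT]
      rw [hρ]
      exact NStep.lambda
  | var => exact NStep.var
  | enter => exact NStep.enter
  | skip => exact NStep.skip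

theorem mapC_final {ρ : ℕ → ℕ} {m' : ℕ} {C : NConf} {F : NFlag} (h : NFinal C F) :
    NFinal (mapC ρ m' C) F := by
  cases h
  exact NFinal.done

theorem mapC_ntau_inv {ρ : ℕ → ℕ} {m' : ℕ} {C D : NConf} (h : NTau (mapC ρ m' C) D) :
    ∃ C', NTau C C' ∧ D = mapC ρ m' C' := by
  cases C with
  | ev t π k =>
      cases t with
      | fvar f => cases π <;> simp only [mapC, Term.ren, Stack.renS] at h <;> cases h
      | bvar n => cases π <;> simp only [mapC, Term.ren, Stack.renS] at h <;> cases h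
      | lam t0 =>
          cases π with
          | nil => simp only [mapC, Term.ren, Stack.renS] at h; cases h
          | cons a ψ =>
              simp only [mapC, Term.ren, Stack.renS] at h
              cases h with
              | grab =>
                  exact ⟨.ev (t0.substT 0 a) ψ k, NStep.grab,
                    by simp [mapC, Term.ren_substT]⟩
      | app t1 t2 =>
          cases π with
          | nil =>
              simp only [mapC, Term.ren, Stack.renS] at h
              cases h with
              | push => exact ⟨.ev t1 (.cons t2 .nil) k, NStep.push, by simp [mapC, Stack.renS]⟩
          | cons a ψ =>
              simp only [mapC, Term.ren, Stack.renS] at h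
              cases h with
              | push => exact ⟨.ev t1 (.cons t2 (.cons a ψ)) k, NStep.push, by simp [mapC, Stack.renS]⟩
  | cont π k =>
      cases π <;> simp only [mapC, Stack.renS] at h <;> cases h

theorem mapC_ntaus_inv {ρ : ℕ → ℕ} {m' : ℕ} {C D : NConf}
    (h : Relation.ReflTransGen NTau (mapC ρ m' C) D) :
    ∃ C', Relation.ReflTransGen NTau C C' ∧ D = mapC ρ m' C' := by
  induction h with
  | refl => exact ⟨C, .refl, rfl⟩
  | tail _ hstep ih =>
      obtain ⟨C', hC', rfl⟩ := ih
      obtain ⟨C'', hstep', rfl⟩ := mapC_ntau_inv hstep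
      exact ⟨C'', hC'.tail hstep', rfl⟩

theorem mapC_flag_inv {ρ : ℕ → ℕ} {m' : ℕ} {C : NConf} {F : NFlag} {D : NConf}
    (hρ : ρ C.cnt = m') (h : NFlagStep (mapC ρ m' C) F D) :
    ∃ C' F0, NFlagStep C F0 C' ∧ F = mapF ρ F0 ∧ D = mapC ρ (bump F0 m') C' := by
  cases C with
  | ev t π k =>
      cases t with
      | fvar f =>
          simp only [mapC, Term.ren] at h
          cases h with
          | var => exact ⟨.cont π k, .fvarF f, NStep.var, rfl, by simp [mapC, bump, mapF]⟩
      | bvar n => cases π <;> simp only [mapC, Term.ren, Stack.renS] at h <;> cases h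
      | lam t0 =>
          cases π with
          | nil =>
              simp only [NConf.cnt] at hρ
              simp only [mapC, Term.ren, Stack.renS] at h
              cases h with
              | lambda =>
                  refine ⟨.ev (t0.substT 0 (.fvar k)) .nil (k+1), .flam, NStep.lambda, rfl, ?_⟩
                  simp [mapC, bump, mapF, Term.ren_substT, Term.ren, Stack.renS, hρ]
          | cons a ψ => simp only [mapC, Term.ren, Stack.renS] at h; cases h
      | app t1 t2 => cases π <;> simp only [mapC, Term.ren, Stack.renS] at h <;> cases h
  | cont π k =>
      cases π with
      | nil => simp only [mapC, Stack.renS] at h; cases h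
      | cons a ψ =>
          simp only [mapC, Stack.renS] at h
          cases h with
          | enter => exact ⟨.ev a .nil k, .fenter, NStep.enter, rfl, by simp [mapC, bump, mapF, Stack.renS]⟩
          | skip => exact ⟨.cont ψ k, .fskip, NStep.skip, rfl, by simp [mapC, bump, mapF]⟩

theorem mapC_final_inv {ρ : ℕ → ℕ} {m' : ℕ} {C : NConf} {F : NFlag}
    (h : NFinal (mapC ρ m' C) F) : ∃ k, C = .cont .nil k ∧ F = .fdone := by
  cases C with
  | ev t π k => simp only [mapC] at h; cases h
  | cont π k =>
      cases π with
      | nil => simp only [mapC, Stack.renS] at h; cases h; exact ⟨k, rfl, rfl⟩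
      | cons a ψ => simp only [mapC, Stack.renS] at h; cases h

theorem bump_shift {ρ : ℕ → ℕ} {m m' : ℕ} (h : ∀ i, ρ (m + i) = m' + i) (F : NFlag) :
    ∀ i, ρ (bump F m + i) = bump F m' + i := by
  cases F <;> simp only [bump] <;> intro i
  case flam =>
    have h2 := h (1 + i)
    rw [show m + 1 + i = m + (1 + i) by omega, show m' + 1 + i = m' + (1 + i) by omega]
    exact h2
  all_goals exact h i

/-- The renaming relation: images of machine-bisimilar pairs. -/
def RenRel : NConf → NConf → Prop := fun X Y =>
  ∃ C1 C2 m m' ρ, MachineBisim NTau NFlagStep NFinal C1 C2 ∧ C1.cnt = m ∧ C2.cnt = m ∧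
    (∀ i, ρ (m + i) = m' + i) ∧ X = mapC ρ m' C1 ∧ Y = mapC ρ m' C2

theorem renRel_isBisim : IsMachineBisim NTau NFlagStep NFinal RenRel := by
  constructor
  · rintro X Y ⟨C1, C2, m, m', ρ, hb, h1, h2, hρ, rfl, rfl⟩
    exact ⟨C2, C1, m, m', ρ, hb.symm, h2, h1, hρ, rfl, rfl⟩
  · rintro X Y ⟨C1, C2, m, m', ρ, hb, h1, h2, hρ, rfl, rfl⟩
    have hρ0 : ρ m = m' := by simpa using hρ 0
    constructor
    · rintro F X' ⟨D, htau, hf⟩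
      obtain ⟨Cm, htau1, rfl⟩ := mapC_ntaus_inv htau
      have hcnt : Cm.cnt = m := by rw [ntaus_cnt htau1, h1]
      obtain ⟨C1', F0, hstep0, rfl, rfl⟩ := mapC_flag_inv (by rw [hcnt]; exact hρ0) hf
      obtain ⟨C2', ⟨Dm, htau2, hf2⟩, hb'⟩ := hb.flag_match ⟨Cm, htau1, hstep0⟩
      refine ⟨mapC ρ (bump F0 m') C2', ⟨mapC ρ m' Dm, mapC_ntaus htau2, ?_⟩, ?_⟩
      · exact mapC_flag hf2 (by rw [ntaus_cnt htau2, h2]; exact hρ0)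
      · exact ⟨C1', C2', bump F0 m, bump F0 m', ρ, hb',
          by rw [hstep0.cnt_eq, hcnt],
          by rw [hf2.cnt_eq, ntaus_cnt htau2, h2],
          bump_shift hρ F0, rfl, rfl⟩
    · rintro F ⟨D, htau, hfin⟩
      obtain ⟨Cm, htau1, rfl⟩ := mapC_ntaus_inv htau
      obtain ⟨k, rfl, rfl⟩ := mapC_final_inv hfin
      obtain ⟨Dm, htau2, hfin2⟩ := hb.final_match ⟨_, htau1, NFinal.done⟩
      exact ⟨mapC ρ m' Dm, mapC_ntaus htau2, mapC_final hfin2⟩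

theorem rename_bisim {C1 C2 : NConf} {m m' : ℕ} {ρ : ℕ → ℕ}
    (hb : MachineBisim NTau NFlagStep NFinal C1 C2) (h1 : C1.cnt = m) (h2 : C2.cnt = m)
    (hρ : ∀ i, ρ (m + i) = m' + i) :
    MachineBisim NTau NFlagStep NFinal (mapC ρ m' C1) (mapC ρ m' C2) :=
  ⟨RenRel, renRel_isBisim, C1, C2, m, m', ρ, hb, h1, h2, hρ, rfl, rfl⟩
/-! ### From machine bisimilarity to normal-form bisimilarity -/

/-- The term relation induced by machine bisimilarity. -/
def RofM : Term → Term → Prop := fun u v =>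
  ∃ m, (∀ g ∈ u.fv ∪ v.fv, g < m) ∧
    MachineBisim NTau NFlagStep NFinal (.ev u .nil m) (.ev v .nil m)

theorem rofm_cont_stackrel {m : ℕ} :
    ∀ (π : Stack) (π' : Stack),
      MachineBisim NTau NFlagStep NFinal (.cont π m) (.cont π' m) →
      (∀ g ∈ π.fvS, g < m) → (∀ g ∈ π'.fvS, g < m) →
      StackRel RofM π π' := by
  intro π
  induction π with
  | nil =>
      intro π' hb _ _
      obtain ⟨C, htau, hfin⟩ := hb.final_match ⟨.cont .nil m, .refl, NFinal.done⟩
      have := ntaus_cont htau; subst this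
      cases hfin
      exact StackRel.nil
  | cons a ψ ih =>
      intro π' hb hπ hπ'
      -- enter challenge determines the head of π'
      obtain ⟨C2', ⟨C, htau, hf⟩, hb1⟩ :=
        hb.flag_match (F := .fenter) (C1' := .ev a .nil m)
          ⟨.cont (.cons a ψ) m, .refl, NStep.enter⟩
      have := ntaus_cont htau; subst this
      cases hf with
      | @enter b ψ' _ =>
          -- skip challenge gives the tails
          obtain ⟨C3', ⟨C, htau2, hf2⟩, hb2⟩ :=
            hb.flag_match (F := .fskip) (C1' := .cont ψ m)
              ⟨.cont (.cons a ψ) m, .refl, NStep.skip⟩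
          have := ntaus_cont htau2; subst this
          cases hf2 with
          | skip =>
              refine StackRel.cons ?_ (ih ψ' hb2 ?_ ?_)
              · refine ⟨m, ?_, hb1⟩
                intro g hg
                rcases Finset.mem_union.1 hg with h' | h'
                · exact hπ g (by simp [Stack.fvS, h'])
                · exact hπ' g (by simp [Stack.fvS, h'])
              · intro g hg; exact hπ g (by simp [Stack.fvS, hg])
              · intro g hg; exact hπ' g (by simp [Stack.fvS, hg])

theorem rofm_isNFBisim : IsNFBisim RofM := by
  constructor
  · rintro u v ⟨m, hbnd, hb⟩
    exact ⟨m, by intro g hg; apply hbnd; rw [Finset.union_comm]; exact hg, hb.symm⟩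
  · rintro u v ⟨m, hbnd, hb⟩
    have hbu : ∀ g ∈ u.fv, g < m := fun g hg => hbnd g (Finset.mem_union_left _ hg)
    have hbv : ∀ g ∈ v.fv, g < m := fun g hg => hbnd g (Finset.mem_union_right _ hg)
    constructor
    · -- lambda normal forms
      intro t' hks
      obtain ⟨C2', ⟨C, htau, hf⟩, hb'⟩ :=
        hb.flag_match (F := .flam) (C1' := .ev (t'.substT 0 (.fvar m)) .nil (m+1))
          ⟨.ev (.lam t') .nil m, ksteps_to_ntaus m hks, NStep.lambda⟩
      obtain ⟨v', π', rfl, hks'⟩ := ntaus_ev htau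
      cases hf with
      | @lambda s' _ =>
          refine ⟨s', hks', ?_⟩
          intro f _
          have hfvt' : t'.fv ⊆ u.fv := by
            simpa [KConf.fvK, Stack.fvS, Term.fv] using hks.fv_mono
          have hfvs' : s'.fv ⊆ v.fv := by
            simpa [KConf.fvK, Stack.fvS, Term.fv] using hks'.fv_mono
          set M := max (m+1) (f+1) with hM
          set ρ : ℕ → ℕ := fun g => if g < m then g else if g = m then f else M + (g - m - 1)
            with hρdef
          have hρshift : ∀ i, ρ ((m+1) + i) = M + i := by
            intro i
            simp only [hρdef]
            have h1 : ¬ (m + 1 + i < m) := by omega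
            have h2 : ¬ (m + 1 + i = m) := by omega
            simp only [h1, h2, if_false]
            congr 1
            omega
          have hρm : ρ m = f := by simp [hρdef]
          have hrent : Term.ren ρ t' = t' :=
            Term.ren_id_of_fv (fun g hg => by
              have : g < m := hbu g (hfvt' hg)
              simp [hρdef, this])
          have hrens : Term.ren ρ s' = s' :=
            Term.ren_id_of_fv (fun g hg => by
              have : g < m := hbv g (hfvs' hg)
              simp [hρdef, this])
          have hmap := rename_bisim (m := m+1) (m' := M) (ρ := ρ) hb' rfl rfl hρshift
          refine ⟨M, ?_, ?_⟩
          · intro g hg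
            rcases Finset.mem_union.1 hg with h' | h'
            · rcases Finset.mem_union.1 (Term.fv_substT _ _ _ h') with h'' | h''
              · have := hbu g (hfvt' h''); omega
              · simp [Term.fv] at h''; omega
            · rcases Finset.mem_union.1 (Term.fv_substT _ _ _ h') with h'' | h''
              · have := hbv g (hfvs' h''); omega
              · simp [Term.fv] at h''; omega
          · have e1 : mapC ρ M (.ev (t'.substT 0 (.fvar m)) .nil (m+1))
                = .ev (t'.substT 0 (.fvar f)) .nil M := by
              simp [mapC, Stack.renS, Term.ren_substT, hrent, Term.ren, hρm]
            have e2 : mapC ρ M (.ev (s'.substT 0 (.fvar m)) .nil (m+1))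
                = .ev (s'.substT 0 (.fvar f)) .nil M := by
              simp [mapC, Stack.renS, Term.ren_substT, hrens, Term.ren, hρm]
            rw [e1, e2] at hmap
            exact hmap
    · -- free-variable normal forms
      intro f π hks
      obtain ⟨C2', ⟨C, htau, hf⟩, hb'⟩ :=
        hb.flag_match (F := .fvarF f) (C1' := .cont π m)
          ⟨.ev (.fvar f) π m, ksteps_to_ntaus m hks, NStep.var⟩
      obtain ⟨v', π', rfl, hks'⟩ := ntaus_ev htau
      cases hf with
      | var =>
          refine ⟨π', hks', ?_⟩
          apply rofm_cont_stackrel π π' hb'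
          · intro g hg
            have : (KConf.fvK ⟨.fvar f, π⟩) ⊆ u.fv := by
              simpa [KConf.fvK, Stack.fvS] using hks.fv_mono
            exact hbu g (this (Finset.mem_union_right _ hg))
          · intro g hg
            have : (KConf.fvK ⟨.fvar f, π'⟩) ⊆ v.fv := by
              simpa [KConf.fvK, Stack.fvS] using hks'.fv_mono
            exact hbv g (this (Finset.mem_union_right _ hg))

/-- `t ~nf s` iff there exists `n` greater than every free variable of `t` and `s`
such that `<t | [] | n>_ev ~m <s | [] | n>_ev`. -/
theorem nf_bisim_iff_machine_bisim (t s : Term) :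
    NFBisim t s ↔
      ∃ n : ℕ, (∀ f ∈ t.fv ∪ s.fv, f < n) ∧
        MachineBisim NTau NFlagStep NFinal (.ev t .nil n) (.ev s .nil n) := by
  constructor
  · rintro ⟨R, hR, hts⟩
    refine ⟨(t.fv ∪ s.fv).sup id + 1, ?_, ?_⟩
    · intro f hf
      have := Finset.le_sup (f := id) hf
      simp only [id] at this
      omega
    · exact ⟨MRel R, mrel_isBisim hR, MRel.ev hts (fun g hg => by
        have := Finset.le_sup (f := id) hg
        simp only [id] at this
        omega)⟩
  · rintro ⟨n, hbnd, hb⟩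
    exact ⟨RofM, rofm_isNFBisim, n, hbnd, hb⟩
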